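/- Let (X, ν) be a measure space and define F : L²(X, ν) → ℝ by F(v) := ∫_X (min(v(x), 0))² dν(x). Then F is directionally differentiable: for all v, h ∈ L²(X, ν), the limit lim_{t→0⁺} (F(v + t h) − F(v))/t exists and equals 2 ∫_X min(v(x), 0) · h(x) dν(x). -/

import Mathlib

open MeasureTheory Filter
open scoped Topology

private lemma min_zero_lipschitz (x y : ℝ) : |min x 0 - min y 0| ≤ |x - y| := by
  rcases le_total x 0 with hx | hx <;> rcases le_total y 0 with hy | hy <;>
    rw [abs_le] <;>
    constructor <;>
    simp [min_eq_left, min_eq_right, hx, hy] <;>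
    cases abs_cases (x - y) <;> nlinarith

private lemma minsq_slope (a b : ℝ) :
    Tendsto (fun t : ℝ => (min (a + t * b) 0 ^ 2 - min a 0 ^ 2) / t)
      (𝓝[>] (0:ℝ)) (𝓝 (2 * min a 0 * b)) := by
  rcases lt_trichotomy a 0 with ha | ha | ha
  · -- a < 0
    have hten : Tendsto (fun t : ℝ => a + t * b) (𝓝[>] (0:ℝ)) (𝓝 a) := by
      have : Tendsto (fun t : ℝ => a + t * b) (𝓝 (0:ℝ)) (𝓝 (a + 0 * b)) :=
        (tendsto_id.mul_const _).const_add _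
      simpa using this.mono_left nhdsWithin_le_nhds
    have hsmall : ∀ᶠ t in 𝓝[>] (0:ℝ), a + t * b < 0 := hten.eventually_lt_const ha
    have heq : ∀ᶠ t in 𝓝[>] (0:ℝ),
        2 * a * b + t * b ^ 2 = (min (a + t * b) 0 ^ 2 - a ^ 2) / t := by
      filter_upwards [hsmall, self_mem_nhdsWithin] with t h1 (h2 : 0 < t)
      rw [min_eq_left h1.le]
      field_simp
      ring
    have h1 : Tendsto (fun t : ℝ => 2 * a * b + t * b ^ 2) (𝓝[>] (0:ℝ)) (𝓝 (2 * a * b)) := by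
      have : Tendsto (fun t : ℝ => 2 * a * b + t * b ^ 2) (𝓝 (0:ℝ))
          (𝓝 (2 * a * b + 0 * b ^ 2)) := (tendsto_id.mul_const _).const_add _
      simpa using this.mono_left nhdsWithin_le_nhds
    rw [min_eq_left ha.le]
    exact h1.congr' heq
  · -- a = 0
    subst ha
    have heq : ∀ᶠ t in 𝓝[>] (0:ℝ),
        t * (min b 0) ^ 2 = (min (0 + t * b) 0 ^ 2 - min (0:ℝ) 0 ^ 2) / t := by
      filter_upwards [self_mem_nhdsWithin] with t (ht : 0 < t)
      have : min (t * b) 0 = t * min b 0 := by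
        rcases le_total b 0 with hb | hb
        · rw [min_eq_left (by nlinarith), min_eq_left hb]
        · rw [min_eq_right (by positivity), min_eq_right hb, mul_zero]
      rw [zero_add, this]
      field_simp
      simp
    have h1 : Tendsto (fun t : ℝ => t * (min b 0) ^ 2) (𝓝[>] (0:ℝ)) (𝓝 0) := by
      have : Tendsto (fun t : ℝ => t * (min b 0) ^ 2) (𝓝 (0:ℝ)) (𝓝 (0 * (min b 0) ^ 2)) :=
        tendsto_id.mul_const _
      simpa using this.mono_left nhdsWithin_le_nhds
    have : (2 : ℝ) * min 0 0 * b = 0 := by simp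
    rw [this]
    exact h1.congr' heq
  · -- a > 0
    have hten : Tendsto (fun t : ℝ => a + t * b) (𝓝[>] (0:ℝ)) (𝓝 a) := by
      have : Tendsto (fun t : ℝ => a + t * b) (𝓝 (0:ℝ)) (𝓝 (a + 0 * b)) :=
        (tendsto_id.mul_const _).const_add _
      simpa using this.mono_left nhdsWithin_le_nhds
    have hsmall : ∀ᶠ t in 𝓝[>] (0:ℝ), 0 < a + t * b := hten.eventually_const_lt ha
    have heq : ∀ᶠ t in 𝓝[>] (0:ℝ),
        (0:ℝ) = (min (a + t * b) 0 ^ 2 - min a 0 ^ 2) / t := by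
      filter_upwards [hsmall] with t h1
      rw [min_eq_right h1.le, min_eq_right ha.le]
      simp
    have : (2 : ℝ) * min a 0 * b = 0 := by
      rw [min_eq_right ha.le]; ring
    rw [this]
    exact tendsto_const_nhds.congr' heq

/-- The functional `F(v) = ∫ (min(v,0))² dν = ‖v₋‖²_{L²}` on `L²(X,ν)` is directionally
differentiable: for all `v, h ∈ L²`, the one-sided difference quotients
`(F(v + t h) - F(v))/t` converge, as `t → 0⁺`, to `2 ∫ min(v,0)·h dν`. -/
theorem neg_part_sq_directionally_differentiable {X : Type*} [MeasurableSpace X]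
    (ν : Measure X) (v h : Lp ℝ 2 ν) :
    Tendsto
      (fun t : ℝ =>
        ((∫ x, (min ((v + t • h) x) 0) ^ 2 ∂ν) - ∫ x, (min (v x) 0) ^ 2 ∂ν) / t)
      (nhdsWithin 0 (Set.Ioi 0))
      (nhds (2 * ∫ x, min (v x) 0 * h x ∂ν)) := by
  have hv2 : MemLp (fun x => v x) 2 ν := Lp.memLp v
  have hh2 : MemLp (fun x => h x) 2 ν := Lp.memLp h
  have hvm : AEMeasurable (fun x => v x) ν := hv2.aestronglyMeasurable.aemeasurable
  have hhm : AEMeasurable (fun x => h x) ν := hh2.aestronglyMeasurable.aemeasurable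
  -- integrability of min squared, for any L² combination
  have hIntMin : ∀ t : ℝ, Integrable (fun x => min (v x + t * h x) 0 ^ 2) ν := by
    intro t
    have hmem : MemLp (fun x => v x + t * h x) 2 ν := hv2.add (hh2.const_mul t)
    have hmin : MemLp (fun x => min (v x + t * h x) 0) 2 ν := by
      refine hmem.of_le ?_ (Eventually.of_forall fun x => ?_)
      · exact ((hvm.add (hhm.const_mul t)).min aemeasurable_const).aestronglyMeasurable
      · simp only [Real.norm_eq_abs]
        cases le_total (v x + t * h x) 0 with
        | inl hle => rw [min_eq_left hle]
        | inr hle => rw [min_eq_right hle]; simpa using abs_nonneg _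
    exact hmin.integrable_sq
  have hIntMin0 : Integrable (fun x => min (v x) 0 ^ 2) ν := by
    have := hIntMin 0
    simpa using this
  -- the difference quotient as a single integral
  have heq : ∀ t : ℝ,
      ((∫ x, (min ((v + t • h) x) 0) ^ 2 ∂ν) - ∫ x, (min (v x) 0) ^ 2 ∂ν) / t =
      ∫ x, (min (v x + t * h x) 0 ^ 2 - min (v x) 0 ^ 2) / t ∂ν := by
    intro t
    have hcoe : (fun x => (v + t • h) x) =ᵐ[ν] fun x => v x + t * h x := by
      filter_upwards [Lp.coeFn_add v (t • h), Lp.coeFn_smul t h] with x h1 h2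
      simp only [h1, Pi.add_apply, h2, Pi.smul_apply, smul_eq_mul]
    have h1 : ∫ x, (min ((v + t • h) x) 0) ^ 2 ∂ν = ∫ x, min (v x + t * h x) 0 ^ 2 ∂ν := by
      refine integral_congr_ae ?_
      filter_upwards [hcoe] with x hx
      rw [hx]
    rw [h1, ← integral_sub (hIntMin t) hIntMin0, ← integral_div]
  -- dominated convergence
  have key : Tendsto
      (fun t : ℝ => ∫ x, (min (v x + t * h x) 0 ^ 2 - min (v x) 0 ^ 2) / t ∂ν)
      (𝓝[>] (0:ℝ)) (𝓝 (∫ x, 2 * min (v x) 0 * h x ∂ν)) := by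
    apply tendsto_integral_filter_of_dominated_convergence
      (bound := fun x => v x ^ 2 + 2 * h x ^ 2)
    · refine Eventually.of_forall fun t => ?_
      exact ((((((hvm.add (hhm.const_mul t)).min aemeasurable_const).pow
        aemeasurable_const).sub
        ((hvm.min aemeasurable_const).pow aemeasurable_const)).div_const t).aestronglyMeasurable)
    · filter_upwards [Ioc_mem_nhdsGT_of_mem (Set.left_mem_Ico.2 one_pos)] with t ht
      refine Eventually.of_forall fun x => ?_
      obtain ⟨ht0, ht1⟩ := ht
      set a := v x
      set b := h x
      have hlip : |min (a + t * b) 0 - min a 0| ≤ t * |b| := by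
        have := min_zero_lipschitz (a + t * b) a
        simpa [abs_mul, abs_of_pos ht0] using this
      have hA : |min (a + t * b) 0| ≤ |a| + t * |b| := by
        have h1 : |min (a + t * b) 0| ≤ |a + t * b| := by
          cases le_total (a + t * b) 0 with
          | inl hle => rw [min_eq_left hle]
          | inr hle => rw [min_eq_right hle]; simpa using abs_nonneg _
        calc |min (a + t * b) 0| ≤ |a + t * b| := h1
          _ ≤ |a| + |t * b| := abs_add_le _ _
          _ = |a| + t * |b| := by rw [abs_mul, abs_of_pos ht0]
      have hB : |min a 0| ≤ |a| := by
        cases le_total a 0 with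
        | inl hle => rw [min_eq_left hle]
        | inr hle => rw [min_eq_right hle]; simpa using abs_nonneg _
      have hfact : min (a + t * b) 0 ^ 2 - min a 0 ^ 2 =
          (min (a + t * b) 0 + min a 0) * (min (a + t * b) 0 - min a 0) := by ring
      rw [Real.norm_eq_abs, abs_div, abs_of_pos ht0, div_le_iff₀ ht0, hfact, abs_mul]
      have habs : |min (a + t * b) 0 + min a 0| ≤ 2 * |a| + t * |b| := by
        calc |min (a + t * b) 0 + min a 0| ≤ |min (a + t * b) 0| + |min a 0| := abs_add_le _ _
          _ ≤ (|a| + t * |b|) + |a| := add_le_add hA hB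
          _ = 2 * |a| + t * |b| := by ring
      have hmul : |min (a + t * b) 0 + min a 0| * |min (a + t * b) 0 - min a 0| ≤
          (2 * |a| + t * |b|) * (t * |b|) :=
        mul_le_mul habs hlip (abs_nonneg _) (by positivity)
      refine hmul.trans ?_
      have h2ab : 2 * |a| * |b| ≤ a ^ 2 + b ^ 2 := by nlinarith [sq_nonneg (|a| - |b|), sq_abs a, sq_abs b]
      have : (2 * |a| + t * |b|) * (t * |b|) = t * (2 * |a| * |b| + t * b ^ 2) := by
        rw [← sq_abs b]; ring
      rw [this]
      have hb2 : t * b ^ 2 ≤ b ^ 2 := by nlinarith [sq_nonneg b]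
      have : 2 * |a| * |b| + t * b ^ 2 ≤ a ^ 2 + 2 * b ^ 2 := by nlinarith
      nlinarith [ht0.le]
    · exact hv2.integrable_sq.add ((hh2.integrable_sq).const_mul 2)
    · exact Eventually.of_forall fun x => minsq_slope (v x) (h x)
  have hval : 2 * ∫ x, min (v x) 0 * h x ∂ν = ∫ x, 2 * min (v x) 0 * h x ∂ν := by
    rw [← integral_const_mul]
    congr 1
    ext x
    ring
  rw [hval]
  exact key.congr (fun t => (heq t).symm)
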